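/- Let E be a finite-dimensional complex inner product space, V a subspace, and π : E → V^⊥ the orthogonal projection onto the orthogonal complement of V. For v₁,…,v_ℓ spanning V and any u₁,…,u_k ∈ E, det(Gram(u₁,…,u_k,v₁,…,v_ℓ)) = det(Gram(π(u₁),…,π(u_k))) · det(Gram(v₁,…,v_ℓ)). -/

import Mathlib

open scoped InnerProductSpace

/-- Gram determinant of a tuple of vectors. -/
noncomputable def gramDet {E : Type*} [NormedAddCommGroup E]
    [InnerProductSpace ℂ E] {m : Type*} [Fintype m] [DecidableEq m]
    (a : m → E) : ℂ :=
  Matrix.det (Matrix.of fun i j => ⟪a i, a j⟫_ℂ)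

/-- For `V = span (v₁, …, v_ℓ)` and `π` the orthogonal projection onto `V^⊥`,
`det Gram(u₁, …, u_k, v₁, …, v_ℓ) = det Gram(π u₁, …, π u_k) · det Gram(v₁, …, v_ℓ)`.
This is `‖U ∨ V‖ = ‖Π_V^⊥ U‖ · ‖V‖` for decomposable multivectors. -/
theorem gram_det_append_eq_proj {E : Type*} [NormedAddCommGroup E]
    [InnerProductSpace ℂ E] [FiniteDimensional ℂ E] {k ℓ : ℕ}
    (u : Fin k → E) (v : Fin ℓ → E) :
    gramDet (Sum.elim u v) =
      gramDet (fun i => ((Submodule.orthogonalProjectionOnto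
          (Submodule.span ℂ (Set.range v))ᗮ (u i) : ↥(Submodule.span ℂ (Set.range v))ᗮ) : E)) *
        gramDet v := by
  unfold gramDet
  set V := Submodule.span ℂ (Set.range v) with hV
  set p : E → E := fun x => ((Submodule.orthogonalProjectionOnto Vᗮ x : Vᗮ) : E) with hp
  have hpmem : ∀ x, p x ∈ Vᗮ := fun x => (Submodule.orthogonalProjectionOnto Vᗮ x).2
  have hmem : ∀ i, u i - p (u i) ∈ V := by
    intro i
    have h := Submodule.sub_starProjection_mem_orthogonal (K := Vᗮ) (u i)
    rwa [Submodule.orthogonal_orthogonal] at h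
  have hc : ∀ i, ∃ c : Fin ℓ → ℂ, ∑ j, c j • v j = u i - p (u i) := by
    intro i
    exact (Submodule.mem_span_range_iff_exists_fun ℂ).1 (hmem i)
  choose c hc using hc
  set b : Fin k ⊕ Fin ℓ → E := Sum.elim (fun i => p (u i)) v with hb
  set L : Matrix (Fin k ⊕ Fin ℓ) (Fin k ⊕ Fin ℓ) ℂ :=
    Matrix.fromBlocks 1 (Matrix.of c) 0 1 with hL
  have ha : ∀ i, Sum.elim u v i = ∑ m, L i m • b m := by
    intro i
    cases i with
    | inl i =>
        simp [hL, hb, Fintype.sum_sum_type, Matrix.fromBlocks,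
          Matrix.one_apply, ite_smul, Finset.sum_ite_eq, hc i]
    | inr j =>
        simp [hL, hb, Fintype.sum_sum_type, Matrix.fromBlocks,
          Matrix.one_apply, ite_smul, Finset.sum_ite_eq]
  have hG : (Matrix.of fun i j => ⟪Sum.elim u v i, Sum.elim u v j⟫_ℂ) =
      (L.map (starRingEnd ℂ)) * (Matrix.of fun i j => ⟪b i, b j⟫_ℂ) * L.transpose := by
    ext i j
    rw [Matrix.mul_apply]
    simp only [Matrix.of_apply, ha, Matrix.mul_apply, Matrix.map_apply, Matrix.transpose_apply,
      sum_inner, inner_sum, inner_smul_left, inner_smul_right, Finset.sum_mul, Finset.mul_sum]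
    refine Finset.sum_congr rfl fun m _ => Finset.sum_congr rfl fun n _ => ?_
    ring
  have hdetL : L.det = 1 := by
    rw [hL, Matrix.det_fromBlocks_zero₂₁]
    simp
  have hbblock : (Matrix.of fun i j => ⟪b i, b j⟫_ℂ) =
      Matrix.fromBlocks (Matrix.of fun i j => ⟪p (u i), p (u j)⟫_ℂ) 0 0
        (Matrix.of fun i j => ⟪v i, v j⟫_ℂ) := by
    ext i j
    cases i with
    | inl i =>
        cases j with
        | inl j => rfl
        | inr j =>
            have h0 : ⟪v j, p (u i)⟫_ℂ = 0 :=
              (hpmem (u i)) (v j) (Submodule.subset_span ⟨j, rfl⟩)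
            have : ⟪p (u i), v j⟫_ℂ = 0 := by
              rw [← inner_conj_symm, h0]; simp
            simpa [hb, Matrix.fromBlocks] using this
    | inr i =>
        cases j with
        | inl j =>
            have : ⟪v i, p (u j)⟫_ℂ = 0 :=
              (hpmem (u j)) (v i) (Submodule.subset_span ⟨i, rfl⟩)
            simpa [hb, Matrix.fromBlocks] using this
        | inr j => rfl
  have hdetL' : (L.map (starRingEnd ℂ)).det = 1 := by
    have hLmap : L.map (starRingEnd ℂ) =
        Matrix.fromBlocks 1 ((Matrix.of c).map (starRingEnd ℂ)) 0 1 := by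
      rw [hL]
      ext i j
      cases i <;> cases j <;>
        simp [Matrix.fromBlocks, Matrix.one_apply, apply_ite]
    rw [hLmap, Matrix.det_fromBlocks_zero₂₁]
    simp
  rw [hG, Matrix.det_mul, Matrix.det_mul, Matrix.det_transpose, hdetL, hdetL',
    hbblock, Matrix.det_fromBlocks_zero₂₁]
  ring
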